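/- arXiv:1101.0599 — 2 statements merged into one kernel-verified Lean document; each statement's English description precedes it below -/
import Mathlib

section
/- If $A$ is an infinite set of positive integers with $\gcd(A) = 1$, then the partition function $p_A(n)$ has superpolynomial growth, i.e., $\lim_{n \to \infty} \frac{\log p_A(n)}{\log n} = \infty$. -/
open Filter

/-- `f` is a representation of `n` with parts in `A` and multiplicities in `M`:
`n = ∑ a ∈ A, m_a * a` with each nonzero multiplicity lying in `M`. -/
def IsRepr (A M : Set ℕ) (n : ℕ) (f : ℕ →₀ ℕ) : Prop :=
  (∀ a ∈ f.support, a ∈ A) ∧ (∀ a ∈ f.support, f a ∈ M) ∧ f.sum (fun a m => m * a) = n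

/-- number of partitions of `n` with parts in `A` and multiplicities in `M` -/
noncomputable def pAM (A M : Set ℕ) (n : ℕ) : ℕ :=
  Nat.card {f : ℕ →₀ ℕ // IsRepr A M n f}

/-- number of partitions of `n` with parts in `A` (unrestricted multiplicities) -/
noncomputable def pA (A : Set ℕ) (n : ℕ) : ℕ :=
  pAM A {m | 0 < m} n

/-- counting function of a set of positive integers -/
noncomputable def cnt (S : Set ℕ) (x : ℝ) : ℕ :=
  Nat.card {a : ℕ // a ∈ S ∧ (a : ℝ) ≤ x}

lemma repr_term_le {A : Set ℕ} {n : ℕ} {f : ℕ →₀ ℕ} (h : IsRepr A {m | 0 < m} n f)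
    {a : ℕ} (ha : a ∈ f.support) : f a * a ≤ n := by
  obtain ⟨h1, h2, h3⟩ := h
  calc f a * a ≤ f.sum (fun a m => m * a) :=
        Finset.single_le_sum (f := fun a => f a * a) (fun i _ => Nat.zero_le _) ha
    _ = n := h3

lemma repr_apply_le {A : Set ℕ} (hpos : ∀ a ∈ A, 0 < a) {n : ℕ} {f : ℕ →₀ ℕ}
    (h : IsRepr A {m | 0 < m} n f) (a : ℕ) : f a ≤ n := by
  by_cases ha : a ∈ f.support
  · have h1 := hpos a (h.1 a ha)
    calc f a = f a * 1 := (mul_one _).symm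
      _ ≤ f a * a := Nat.mul_le_mul_left _ h1
      _ ≤ n := repr_term_le h ha
  · simp [Finsupp.notMem_support_iff.mp ha]

lemma repr_mem_le {A : Set ℕ} {n : ℕ} {f : ℕ →₀ ℕ}
    (h : IsRepr A {m | 0 < m} n f) {a : ℕ} (ha : a ∈ f.support) : a ≤ n := by
  have h1 : 1 ≤ f a := Nat.one_le_iff_ne_zero.mpr (Finsupp.mem_support_iff.mp ha)
  calc a = 1 * a := (one_mul _).symm
    _ ≤ f a * a := Nat.mul_le_mul_right _ h1
    _ ≤ n := repr_term_le h ha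

lemma repr_finite (A : Set ℕ) (hpos : ∀ a ∈ A, 0 < a) (n : ℕ) :
    Finite {f : ℕ →₀ ℕ // IsRepr A {m | 0 < m} n f} := by
  refine Finite.of_injective
    (fun f => (fun i : Fin (n+1) => (⟨f.1 i.1, Nat.lt_succ_of_le (repr_apply_le hpos f.2 i.1)⟩ :
      Fin (n+1)))) ?_
  intro f g hfg
  ext a
  by_cases ha : a ≤ n
  · have := congrFun hfg ⟨a, Nat.lt_succ_of_le ha⟩
    simpa using congrArg Fin.val this
  · have hf : f.1 a = 0 := by
      by_contra h
      exact ha (repr_mem_le f.2 (Finsupp.mem_support_iff.mpr h))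
    have hg : g.1 a = 0 := by
      by_contra h
      exact ha (repr_mem_le g.2 (Finsupp.mem_support_iff.mpr h))
    rw [hf, hg]

noncomputable def asFinsupp (S : Finset ℕ) (m : S → ℕ) : ℕ →₀ ℕ :=
  ∑ i ∈ S.attach, Finsupp.single i.1 (m i)

lemma asFinsupp_apply (S : Finset ℕ) (m : S → ℕ) (j : ℕ) (hj : j ∈ S) :
    asFinsupp S m j = m ⟨j, hj⟩ := by
  rw [asFinsupp, Finsupp.finset_sum_apply]
  rw [Finset.sum_eq_single (⟨j, hj⟩ : S)]
  · simp
  · intro i _ hi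
    rw [Finsupp.single_apply, if_neg]
    intro h
    exact hi (Subtype.ext h)
  · intro h
    exact absurd (Finset.mem_attach S ⟨j, hj⟩) h

lemma asFinsupp_apply_not_mem (S : Finset ℕ) (m : S → ℕ) (j : ℕ) (hj : j ∉ S) :
    asFinsupp S m j = 0 := by
  rw [asFinsupp, Finsupp.finset_sum_apply]
  apply Finset.sum_eq_zero
  intro i _
  rw [Finsupp.single_apply, if_neg]
  intro h
  exact hj (h ▸ i.2)

lemma asFinsupp_support (S : Finset ℕ) (m : S → ℕ) : (asFinsupp S m).support ⊆ S := by
  intro a ha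
  by_contra h
  exact Finsupp.mem_support_iff.mp ha (asFinsupp_apply_not_mem S m a h)

lemma asFinsupp_sum (S : Finset ℕ) (m : S → ℕ) :
    (asFinsupp S m).sum (fun a k => k * a) = ∑ i ∈ S.attach, m i * i.1 := by
  rw [asFinsupp,
    ← Finsupp.sum_finset_sum_index (fun a => zero_mul a) (fun a b₁ b₂ => add_mul b₁ b₂ a)]
  exact Finset.sum_congr rfl fun i _ => Finsupp.sum_single_index (zero_mul _)

lemma pow_le_pA (A : Set ℕ) (hpos : ∀ a ∈ A, 0 < a)
    (B : Finset ℕ) (hBA : ↑B ⊆ A) (N : ℕ)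
    (hrep : ∀ r, N ≤ r → ∃ f : ℕ →₀ ℕ, ↑f.support ⊆ (B : Set ℕ) ∧ f.sum (fun a m => m * a) = r)
    (S : Finset ℕ) (hSA : ↑S ⊆ A) (hSB : ∀ i ∈ S, i ∉ B)
    (n M : ℕ) (hn : N ≤ n) (hM : M * (∑ i ∈ S, i) ≤ n - N) :
    (M + 1) ^ S.card ≤ pA A n := by
  classical
  haveI := repr_finite A hpos n
  choose F hFs hFsum using hrep
  set G : (S → Fin (M+1)) → (ℕ →₀ ℕ) := fun m => asFinsupp S (fun i => (m i).1) with hG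
  have hTle : ∀ m : S → Fin (M+1), (G m).sum (fun a k => k * a) ≤ n - N := by
    intro m
    rw [hG, asFinsupp_sum]
    calc ∑ i ∈ S.attach, (m i).1 * i.1 ≤ ∑ i ∈ S.attach, M * i.1 :=
          Finset.sum_le_sum fun i _ => Nat.mul_le_mul_right _ (Nat.lt_succ_iff.mp (m i).2)
      _ = M * ∑ i ∈ S.attach, i.1 := by rw [Finset.mul_sum]
      _ = M * ∑ i ∈ S, i := by rw [Finset.sum_attach S (fun i => i)]
      _ ≤ n - N := hM
  have hNr : ∀ m : S → Fin (M+1), N ≤ n - (G m).sum (fun a k => k * a) := fun m => by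
    have := hTle m; omega
  have hΦ : ∀ m : S → Fin (M+1), IsRepr A {m | 0 < m} n (F _ (hNr m) + G m) := by
    intro m
    refine ⟨?_, ?_, ?_⟩
    · intro a ha
      have := Finsupp.support_add (g₁ := F _ (hNr m)) (g₂ := G m) ha
      rw [Finset.mem_union] at this
      rcases this with h | h
      · exact hBA (hFs _ (hNr m) h)
      · exact hSA (asFinsupp_support S _ h)
    · intro a ha
      exact Nat.pos_of_ne_zero (Finsupp.mem_support_iff.mp ha)
    · rw [Finsupp.sum_add_index' (fun a => zero_mul a) (fun a b₁ b₂ => add_mul b₁ b₂ a),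
        hFsum _ (hNr m)]
      have := hTle m
      omega
  set Φ : (S → Fin (M+1)) → {f : ℕ →₀ ℕ // IsRepr A {m | 0 < m} n f} :=
    fun m => ⟨F _ (hNr m) + G m, hΦ m⟩ with hΦdef
  have happly : ∀ (m : S → Fin (M+1)) (i : S), (Φ m).1 i.1 = (m i).1 := by
    intro m i
    have hF0 : F _ (hNr m) i.1 = 0 := by
      by_contra h
      exact hSB i.1 i.2 (hFs _ (hNr m) (Finsupp.mem_support_iff.mpr h))
    have hGi : G m i.1 = (m i).1 := by
      rw [hG]
      have := asFinsupp_apply S (fun j => (m j).1) i.1 i.2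
      simpa using this
    show (F _ (hNr m) + G m) i.1 = (m i).1
    rw [Finsupp.add_apply, hF0, hGi, zero_add]
  have hinj : Function.Injective Φ := by
    intro m m' h
    funext i
    apply Fin.ext
    rw [← happly m i, ← happly m' i, h]
  calc (M + 1) ^ S.card = Nat.card (S → Fin (M+1)) := by
        simp [Nat.card_eq_fintype_card]
    _ ≤ Nat.card {f : ℕ →₀ ℕ // IsRepr A {m | 0 < m} n f} :=
        Nat.card_le_card_of_injective Φ hinj
    _ = pA A n := rfl

lemma exists_finset_gcd_one (A : Set ℕ) (hA : A.Nonempty) (hpos : ∀ a ∈ A, 0 < a)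
    (hgcd : ∀ d : ℕ, (∀ a ∈ A, d ∣ a) → d = 1) :
    ∃ B : Finset ℕ, ↑B ⊆ A ∧ B.Nonempty ∧ B.gcd id = 1 := by
  obtain ⟨b₀, hb₀⟩ := hA
  -- strong induction on the gcd
  suffices h : ∀ g : ℕ, ∀ B : Finset ℕ, B.gcd id = g → ↑B ⊆ A → B.Nonempty →
      ∃ C : Finset ℕ, ↑C ⊆ A ∧ C.Nonempty ∧ C.gcd id = 1 by
    refine h (({b₀} : Finset ℕ).gcd id) {b₀} rfl ?_ ⟨b₀, by simp⟩
    simpa using hb₀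
  intro g
  induction g using Nat.strong_induction_on with
  | _ g ih =>
    intro B hBg hBA hBne
    rcases eq_or_ne g 1 with h1 | h1
    · exact ⟨B, hBA, hBne, hBg ▸ h1⟩
    have hg0 : g ≠ 0 := by
      intro h0
      obtain ⟨b, hb⟩ := hBne
      have : b = 0 := by
        have := Finset.gcd_eq_zero_iff.mp (hBg.trans h0) b hb
        simpa using this
      exact absurd (hpos b (hBA hb)) (by omega)
    have : ¬ ∀ a ∈ A, g ∣ a := fun h => h1 (hgcd g h)
    push_neg at this
    obtain ⟨a, haA, hnd⟩ := this
    have hlt : (insert a B).gcd id < g := by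
      rw [Finset.gcd_insert]
      have hdvd : Nat.gcd (id a) (B.gcd id) ∣ g := hBg ▸ Nat.gcd_dvd_right _ _
      have hne : Nat.gcd (id a) (B.gcd id) ≠ g := by
        intro h
        exact hnd (h ▸ Nat.gcd_dvd_left (id a) (B.gcd id))
      exact lt_of_le_of_ne (Nat.le_of_dvd (Nat.pos_of_ne_zero hg0) hdvd) hne
    exact ih _ hlt (insert a B) rfl (by
      rw [Finset.coe_insert]; exact Set.insert_subset haA hBA) ⟨a, Finset.mem_insert_self a B⟩

lemma exists_rep (B : Finset ℕ) (hB : B.Nonempty) (hpos : ∀ b ∈ B, 0 < b) :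
    ∃ N : ℕ, ∀ n, N ≤ n → B.gcd id ∣ n →
      ∃ f : ℕ →₀ ℕ, ↑f.support ⊆ (B : Set ℕ) ∧ f.sum (fun a m => m * a) = n := by
  induction hB using Finset.Nonempty.cons_induction with
  | singleton b =>
    refine ⟨0, fun n _ hd => ?_⟩
    simp only [Finset.gcd_singleton, id] at hd
    replace hd : b ∣ n := by simpa using hd
    refine ⟨Finsupp.single b (n / b), ?_, ?_⟩
    · intro x hx
      simp only [Finset.coe_singleton]
      exact ((Finsupp.mem_support_single _ _ _).mp (by simpa using hx)).1
    · rw [Finsupp.sum_single_index (by simp)]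
      exact Nat.div_mul_cancel hd
  | cons b B' hbB' hB'ne ih =>
    obtain ⟨N', hN'⟩ := ih (fun x hx => hpos x (Finset.mem_cons_of_mem hx))
    set g := B'.gcd id with hg
    have hg0 : 0 < g := by
      obtain ⟨c, hc⟩ := hB'ne
      have : g ≠ 0 := by
        intro h0
        have := Finset.gcd_eq_zero_iff.mp h0 c hc
        simp only [id] at this
        exact absurd (hpos c (Finset.mem_cons_of_mem hc)) (by omega)
      omega
    refine ⟨N' + g * b, fun n hn hd => ?_⟩
    rw [Finset.cons_eq_insert, Finset.gcd_insert] at hd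
    set g' := Nat.gcd (id b) g with hg'
    -- Bezout
    set u := Nat.gcdA (id b) g
    set v := Nat.gcdB (id b) g
    have hbez : (g' : ℤ) = b * u + g * v := Nat.gcd_eq_gcd_ab (id b) g
    set q := n / g' with hq
    have hqg : q * g' = n := Nat.div_mul_cancel hd
    set m : ℕ := ((q : ℤ) * u % (g : ℤ)).toNat with hm
    have hgz : (0 : ℤ) < (g : ℤ) := by exact_mod_cast hg0
    have hmz : (m : ℤ) = (q : ℤ) * u % (g : ℤ) :=
      Int.toNat_of_nonneg (Int.emod_nonneg _ (by omega))
    have hmlt : m < g := by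
      have := Int.emod_lt_of_pos ((q : ℤ) * u) hgz
      omega
    have hmble : m * b ≤ n := by
      calc m * b ≤ g * b := Nat.mul_le_mul_right b (le_of_lt hmlt)
        _ ≤ n := le_trans (Nat.le_add_left _ _) hn
    -- g divides n - m*b
    have hdvd : (g : ℤ) ∣ (n : ℤ) - m * b := by
      have h1 : (g : ℤ) ∣ (q : ℤ) * u - m := by
        rw [hmz]
        exact Int.dvd_self_sub_of_emod_eq rfl
      have h2 : (n : ℤ) - m * b = ((q : ℤ) * u - m) * b + (q * v) * g := by
        have : (n : ℤ) = q * g' := by exact_mod_cast hqg.symm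
        rw [this, hbez]; ring
      rw [h2]
      exact dvd_add (h1.mul_right b) ((dvd_refl (g:ℤ)).mul_left _)
    have hdvdnat : g ∣ n - m * b := by
      have : (g : ℤ) ∣ ((n - m * b : ℕ) : ℤ) := by
        rwa [Nat.cast_sub hmble]
      exact_mod_cast this
    have hge : N' ≤ n - m * b := by
      have : m * b ≤ g * b := Nat.mul_le_mul_right b (le_of_lt hmlt)
      omega
    obtain ⟨f', hf's, hf'sum⟩ := hN' (n - m * b) hge hdvdnat
    refine ⟨f' + Finsupp.single b m, ?_, ?_⟩
    · intro x hx
      have := Finsupp.support_add (g₁ := f') (g₂ := Finsupp.single b m) (by simpa using hx)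
      rw [Finset.mem_union] at this
      rcases this with h | h
      · exact Finset.mem_coe.mpr (Finset.mem_cons_of_mem (hf's h))
      · have : x = b := ((Finsupp.mem_support_single _ _ _).mp h).1
        simp [this]
    · rw [Finsupp.sum_add_index' (by simp) (fun a b₁ b₂ => add_mul b₁ b₂ a),
        hf'sum, Finsupp.sum_single_index (by simp)]
      omega

lemma pA_real_lower (A : Set ℕ) (hA : A.Infinite) (hpos : ∀ a ∈ A, 0 < a)
    (hgcd : ∀ d : ℕ, (∀ a ∈ A, d ∣ a) → d = 1) (k : ℕ) :
    ∃ D N₁ : ℕ, 0 < D ∧ ∀ n : ℕ, N₁ ≤ n → ((n : ℝ) / (2 * D)) ^ k ≤ (pA A n : ℝ) := by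
  obtain ⟨B, hBA, hBne, hBgcd⟩ := exists_finset_gcd_one A hA.nonempty hpos hgcd
  obtain ⟨N, hN⟩ := exists_rep B hBne (fun b hb => hpos b (hBA hb))
  have hrep : ∀ r, N ≤ r → ∃ f : ℕ →₀ ℕ, ↑f.support ⊆ (B : Set ℕ) ∧
      f.sum (fun a m => m * a) = r := fun r hr => hN r hr (hBgcd ▸ one_dvd r)
  obtain ⟨S, hSsub, hScard⟩ := (hA.diff B.finite_toSet).exists_subset_card_eq k
  have hSA : ↑S ⊆ A := fun x hx => (hSsub hx).1
  have hSB : ∀ i ∈ S, i ∉ B := fun i hi => (hSsub hi).2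
  set D : ℕ := (∑ i ∈ S, i) + 1 with hD
  refine ⟨D, 2 * N + 2, Nat.succ_pos _, fun n hn => ?_⟩
  set M : ℕ := (n - N) / D with hM
  have hDpos : 0 < D := Nat.succ_pos _
  have hmain : (M + 1) ^ k ≤ pA A n := by
    rw [← hScard]
    refine pow_le_pA A hpos B hBA N hrep S hSA hSB n M (by omega) ?_
    calc M * ∑ i ∈ S, i ≤ M * D := Nat.mul_le_mul_left _ (by omega)
      _ ≤ n - N := Nat.div_mul_le_self _ _
  -- real estimate : n / (2D) ≤ M + 1
  have hlt : n - N < (M + 1) * D := by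
    have h1 : (n - N) / D < M + 1 := Nat.lt_succ_self M
    exact (Nat.div_lt_iff_lt_mul hDpos).mp h1
  have hreal : (n : ℝ) / (2 * D) ≤ (M + 1 : ℕ) := by
    have h2 : (n : ℝ) ≤ 2 * ((n : ℝ) - N) := by
      have : 2 * N ≤ n := by omega
      have : (2 * N : ℝ) ≤ n := by exact_mod_cast this
      linarith
    have h3 : ((n : ℝ) - N) ≤ (M + 1 : ℕ) * D := by
      have : ((n - N : ℕ) : ℝ) ≤ ((M + 1) * D : ℕ) := by exact_mod_cast hlt.le
      rw [Nat.cast_sub (by omega : N ≤ n)] at this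
      push_cast at this ⊢
      linarith
    rw [div_le_iff₀ (by positivity)]
    push_cast at h3 ⊢
    nlinarith
  calc ((n : ℝ) / (2 * D)) ^ k ≤ ((M + 1 : ℕ) : ℝ) ^ k :=
        pow_le_pow_left₀ (by positivity) hreal k
    _ = (((M + 1) ^ k : ℕ) : ℝ) := by push_cast; ring
    _ ≤ (pA A n : ℝ) := by exact_mod_cast hmain

theorem stmt2 (A : Set ℕ) (hA : A.Infinite) (hpos : ∀ a ∈ A, 0 < a)
    (hgcd : ∀ d : ℕ, (∀ a ∈ A, d ∣ a) → d = 1) :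
    Tendsto (fun n : ℕ => Real.log (pA A n) / Real.log n) atTop atTop := by
  rw [tendsto_atTop]
  intro C
  set k : ℕ := ⌈C⌉₊ + 1 with hk
  have hCk : C < (k : ℝ) := by
    calc C ≤ (⌈C⌉₊ : ℝ) := Nat.le_ceil C
      _ < (k : ℝ) := by exact_mod_cast Nat.lt_succ_self _
  obtain ⟨D, N₁, hDpos, hkey⟩ := pA_real_lower A hA hpos hgcd k
  set c : ℝ := Real.log (2 * D) with hc
  set g : ℕ → ℝ := fun n => (k : ℝ) * (Real.log n - c) / Real.log n with hgdef
  have hlimg : Tendsto g atTop (nhds k) := by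
    have hlog : Tendsto (fun n : ℕ => Real.log n) atTop atTop :=
      Real.tendsto_log_atTop.comp tendsto_natCast_atTop_atTop
    have h0 : Tendsto (fun n : ℕ => (k : ℝ) * c / Real.log n) atTop (nhds 0) :=
      Tendsto.div_atTop tendsto_const_nhds hlog
    have heq : ∀ᶠ n : ℕ in atTop, (k : ℝ) - (k : ℝ) * c / Real.log n = g n := by
      filter_upwards [eventually_ge_atTop 2] with n hn
      have hln : Real.log n ≠ 0 := by
        have : (1 : ℝ) < n := by exact_mod_cast hn
        exact ne_of_gt (Real.log_pos this)
      rw [hgdef]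
      field_simp
    have : Tendsto (fun n : ℕ => (k : ℝ) - (k : ℝ) * c / Real.log n) atTop (nhds ((k : ℝ) - 0)) :=
      tendsto_const_nhds.sub h0
    rw [sub_zero] at this
    exact Tendsto.congr' heq this
  have hev1 : ∀ᶠ n : ℕ in atTop, C < g n := (tendsto_order.1 hlimg).1 C hCk
  filter_upwards [hev1, eventually_ge_atTop (max (max N₁ (2 * D)) 2)] with n h1 h2
  have hnN : N₁ ≤ n := le_trans (le_trans (le_max_left _ _) (le_max_left _ _)) h2
  have hnD : 2 * D ≤ n := le_trans (le_trans (le_max_right _ _) (le_max_left _ _)) h2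
  have hn2 : 2 ≤ n := le_trans (le_max_right _ _) h2
  have hlogn : 0 < Real.log n := Real.log_pos (by exact_mod_cast hn2)
  have hDr : (0 : ℝ) < 2 * D := by positivity
  have hbase : (1 : ℝ) ≤ (n : ℝ) / (2 * D) := by
    rw [le_div_iff₀ hDr]
    have : ((2 * D : ℕ) : ℝ) ≤ (n : ℝ) := by exact_mod_cast hnD
    push_cast at this
    linarith
  have hpow := hkey n hnN
  have hbasepos : (0 : ℝ) < ((n : ℝ) / (2 * D)) ^ k := by positivity
  have hpApos : (0 : ℝ) < (pA A n : ℝ) := lt_of_lt_of_le hbasepos hpow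
  have hlogpA : (k : ℝ) * (Real.log n - c) ≤ Real.log (pA A n) := by
    have e1 : Real.log ((n : ℝ) / (2 * D)) = Real.log n - c := by
      rw [hc, Real.log_div (by positivity) (ne_of_gt hDr)]
    calc (k : ℝ) * (Real.log n - c) = Real.log (((n : ℝ) / (2 * D)) ^ k) := by
          rw [Real.log_pow, e1]
      _ ≤ Real.log (pA A n) := Real.log_le_log hbasepos hpow
  have : g n ≤ Real.log (pA A n) / Real.log n := by
    rw [hgdef]
    exact div_le_div_of_nonneg_right hlogpA hlogn.le
  linarith [h1]
end

section
/- Let $A$ and $M$ be sets of positive integers and suppose $p_{A,M}(n)$ grows polynomially, i.e., there exist $k$ and $N_0$ with $p_{A,M}(n) \leq n^k$ for all $n \geq N_0$, and $M$ is infinite. Then it is not the case that $A(x) \geq c \log x$ for some $c > 0$ and all sufficiently large $x$ (with $A$ infinite). -/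
open Filter

lemma term_le_of_repr {A M : Set ℕ} {n : ℕ} {f : ℕ →₀ ℕ} (hf : IsRepr A M n f)
    {a : ℕ} (ha : a ∈ f.support) : f a * a ≤ n := by
  rw [← hf.2.2]
  exact Finset.single_le_sum (f := fun a => f a * a) (fun i _ => Nat.zero_le _) ha

lemma reprFinite (A M : Set ℕ) (hApos : ∀ a ∈ A, 0 < a) (n : ℕ) :
    Finite {f : ℕ →₀ ℕ // IsRepr A M n f} := by
  have key : ∀ (f : {f : ℕ →₀ ℕ // IsRepr A M n f}) (a : ℕ), (f : ℕ →₀ ℕ) a ≤ n := by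
    rintro ⟨f, hf⟩ a
    by_cases ha : a ∈ f.support
    · have h1 : 0 < a := hApos a (hf.1 a ha)
      calc f a = f a * 1 := (mul_one _).symm
        _ ≤ f a * a := Nat.mul_le_mul_left _ h1
        _ ≤ n := term_le_of_repr hf ha
    · simp [Finsupp.notMem_support_iff.mp ha]
  have keysupp : ∀ (f : {f : ℕ →₀ ℕ // IsRepr A M n f}) (a : ℕ), n < a → (f : ℕ →₀ ℕ) a = 0 := by
    rintro ⟨f, hf⟩ a hna
    by_contra h
    have ha : a ∈ f.support := Finsupp.mem_support_iff.mpr h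
    have h1 : 1 ≤ f a := Nat.one_le_iff_ne_zero.mpr h
    have : a ≤ f a * a := le_mul_of_one_le_left (Nat.zero_le _) h1
    exact absurd (this.trans (term_le_of_repr hf ha)) (by omega)
  apply Finite.of_injective (fun f : {f : ℕ →₀ ℕ // IsRepr A M n f} => (fun i : Fin (n+1) => (⟨f.1 i, Nat.lt_succ_of_le (key f i)⟩ : Fin (n+1))))
  rintro ⟨f, hf⟩ ⟨g, hg⟩ h
  ext a
  rcases le_or_gt a n with hle | hlt
  · have := congrFun h ⟨a, Nat.lt_succ_of_le hle⟩
    simpa using congrArg Fin.val this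
  · rw [keysupp ⟨f, hf⟩ a hlt, keysupp ⟨g, hg⟩ a hlt]

lemma key_count (A M : Set ℕ) (hApos : ∀ a ∈ A, 0 < a) (hMpos : ∀ m ∈ M, 0 < m)
    (S : Finset ℕ) (hS : ↑S ⊆ A) (Ms : Finset ℕ) (hMs : ↑Ms ⊆ M)
    (X : ℕ) (hSX : ∀ a ∈ S, a ≤ X) (B : ℕ) (hMsB : ∀ m ∈ Ms, m ≤ B) :
    Ms.card ^ S.card ≤ ∑ n ∈ Finset.Icc S.card (S.card * (B * X)), pAM A M n := by
  classical
  -- the finsupp associated to a multiplicity assignment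
  have hpos : ∀ (g : ↥S → ↥Ms) (a : ℕ) (h : a ∈ S), 0 < (g ⟨a, h⟩ : ℕ) :=
    fun g a h => hMpos _ (hMs (g ⟨a, h⟩).2)
  let F : (↥S → ↥Ms) → (ℕ →₀ ℕ) := fun g =>
    ⟨S, fun a => if h : a ∈ S then (g ⟨a, h⟩ : ℕ) else 0, by
      intro a
      constructor
      · intro ha
        simpa [ha] using (hpos g a ha).ne'
      · intro ha
        by_contra h
        simp [h] at ha⟩
  have hFapp : ∀ (g : ↥S → ↥Ms) (a : ℕ) (h : a ∈ S), F g a = (g ⟨a, h⟩ : ℕ) :=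
    fun g a h => dif_pos h
  have hFsupp : ∀ g, (F g).support = S := fun g => rfl
  have hFsum : ∀ g, (F g).sum (fun a m => m * a) = ∑ a ∈ S, (F g) a * a := fun g => rfl
  set N := S.card * (B * X) with hN
  have hmem : ∀ g, (F g).sum (fun a m => m * a) ∈ Finset.Icc S.card N := by
    intro g
    rw [hFsum g, Finset.mem_Icc]
    constructor
    · calc S.card = ∑ _a ∈ S, 1 := by simp
        _ ≤ ∑ a ∈ S, (F g) a * a := by
            apply Finset.sum_le_sum
            intro a ha
            have h1 : 0 < F g a := by rw [hFapp g a ha]; exact hpos g a ha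
            have h2 : 0 < a := hApos a (hS ha)
            exact Nat.one_le_iff_ne_zero.mpr (Nat.mul_ne_zero h1.ne' h2.ne')
    · calc ∑ a ∈ S, (F g) a * a ≤ ∑ _a ∈ S, B * X := by
            apply Finset.sum_le_sum
            intro a ha
            have h1 : F g a ≤ B := by rw [hFapp g a ha]; exact hMsB _ (g ⟨a, ha⟩).2
            exact Nat.mul_le_mul h1 (hSX a ha)
        _ = N := by simp [hN, Finset.sum_const, mul_comm]
  have hrepr : ∀ g, IsRepr A M ((F g).sum (fun a m => m * a)) (F g) := by
    intro g
    refine ⟨?_, ?_, rfl⟩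
    · intro a ha
      rw [hFsupp] at ha
      exact hS ha
    · intro a ha
      rw [hFsupp] at ha
      rw [hFapp g a ha]
      exact hMs (g ⟨a, ha⟩).2
  haveI : ∀ n : ℕ, Finite {f : ℕ →₀ ℕ // IsRepr A M n f} := reprFinite A M hApos
  let Φ : (↥S → ↥Ms) → Σ n : ↥(Finset.Icc S.card N), {f : ℕ →₀ ℕ // IsRepr A M ↑n f} :=
    fun g => ⟨⟨_, hmem g⟩, ⟨F g, hrepr g⟩⟩
  have hΦinj : Function.Injective Φ := by
    intro g g' h
    have h2 : F g = F g' := congrArg (fun p : Σ n : ↥(Finset.Icc S.card N),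
      {f : ℕ →₀ ℕ // IsRepr A M ↑n f} => (p.2 : ℕ →₀ ℕ)) h
    funext a
    apply Subtype.ext
    have := DFunLike.congr_fun h2 (a : ℕ)
    rwa [hFapp g a a.2, hFapp g' a a.2] at this
  have hcard1 : Nat.card (↥S → ↥Ms) = Ms.card ^ S.card := by
    rw [Nat.card_fun, Nat.card_eq_finsetCard, Nat.card_eq_finsetCard]
  have hle := Nat.card_le_card_of_injective Φ hΦinj
  rw [hcard1] at hle
  refine hle.trans (le_of_eq ?_)
  letI : ∀ i : ↥(Finset.Icc S.card N), Fintype {f : ℕ →₀ ℕ // IsRepr A M ↑i f} :=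
    fun i => Fintype.ofFinite _
  rw [Nat.card_eq_fintype_card, Fintype.card_sigma]
  rw [← Finset.sum_coe_sort (Finset.Icc S.card N) (pAM A M)]
  exact Finset.sum_congr rfl fun i _ => Fintype.card_eq_nat_card

theorem stmt18 (A M : Set ℕ) (hApos : ∀ a ∈ A, 0 < a) (hMpos : ∀ m ∈ M, 0 < m)
    (hM : M.Infinite) (hA : A.Infinite)
    (k N₀ : ℕ) (hpoly : ∀ n : ℕ, N₀ ≤ n → pAM A M n ≤ n ^ k) :
    ¬ ∃ c : ℝ, 0 < c ∧ ∀ᶠ x : ℝ in atTop, c * Real.log x ≤ cnt A x := by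
  classical
  rintro ⟨c, hc, hev⟩
  -- choose the number of multiplicities q
  obtain ⟨q, hq⟩ := exists_nat_gt (Real.exp ((k + 1) / c))
  have hE : (0 : ℝ) < Real.exp ((k + 1) / c) := Real.exp_pos _
  have hE1 : (1 : ℝ) ≤ Real.exp ((k + 1) / c) := Real.one_le_exp (by positivity)
  have hq1 : (1 : ℝ) < q := lt_of_le_of_lt hE1 hq
  have hqpos : 0 < q := by exact_mod_cast zero_lt_one.trans hq1
  -- choose q multiplicities from M
  obtain ⟨Ms, hMsub, hMscard⟩ := hM.exists_subset_card_eq q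
  have hMsne : Ms.Nonempty := Finset.card_pos.mp (hMscard ▸ hqpos)
  set B := Ms.max' hMsne with hBdef
  have hMsB : ∀ m ∈ Ms, m ≤ B := fun m hm => Finset.le_max' _ _ hm
  set r : ℝ := q / Real.exp ((k + 1) / c) with hrdef
  have hr : 1 < r := (one_lt_div hE).mpr hq
  have hr0 : 0 < r := zero_lt_one.trans hr
  set K : ℝ := (2 * ((B : ℝ) + 1)) ^ (k + 1) with hKdef
  have hK : 0 < K := by positivity
  -- choose n₁ witnessing super-polynomial growth of r^n
  have htt := tendsto_pow_const_div_const_pow_of_one_lt (k + 1) hr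
  have hinv : (0 : ℝ) < 1 / (K * r) := by positivity
  obtain ⟨n₁, hn₁⟩ := eventually_atTop.mp (htt.eventually_lt_const hinv)
  -- choose a large x
  have hlog : Tendsto (fun x : ℝ => c * Real.log x) atTop atTop :=
    Real.tendsto_log_atTop.const_mul_atTop hc
  have h3 : ∀ᶠ x : ℝ in atTop, ((max (max N₀ n₁) 1 : ℕ) : ℝ) ≤ c * Real.log x :=
    hlog.eventually_ge_atTop _
  obtain ⟨x, hx1, hx2, hx3⟩ := (hev.and (h3.and (eventually_ge_atTop (1 : ℝ)))).exists
  have hx0 : (0 : ℝ) < x := lt_of_lt_of_le one_pos hx3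
  -- the finset of elements of A up to x
  have hSfin : {a : ℕ | a ∈ A ∧ (a : ℝ) ≤ x}.Finite :=
    (Set.finite_Iic ⌊x⌋₊).subset (fun a ha => Set.mem_Iic.mpr (Nat.le_floor ha.2))
  set S := hSfin.toFinset with hSdef
  have hScard : S.card = cnt A x := (Nat.card_eq_card_finite_toFinset hSfin).symm
  have hSsub : ↑S ⊆ A := fun a ha => (hSfin.mem_toFinset.mp ha).1
  set X := ⌊x⌋₊ with hXdef
  have hSX : ∀ a ∈ S, a ≤ X := fun a ha => Nat.le_floor (hSfin.mem_toFinset.mp ha).2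
  set s := S.card with hsdef
  -- s is large
  have hsR : c * Real.log x ≤ (s : ℝ) := by rw [hScard]; exact hx1
  have hsbig : max (max N₀ n₁) 1 ≤ s := by
    have : ((max (max N₀ n₁) 1 : ℕ) : ℝ) ≤ (s : ℝ) := hx2.trans hsR
    exact_mod_cast this
  have hsN₀ : N₀ ≤ s := le_trans (le_trans (le_max_left _ _) (le_max_left _ _)) hsbig
  have hsn₁ : n₁ ≤ s := le_trans (le_trans (le_max_right _ _) (le_max_left _ _)) hsbig
  -- the counting inequality
  have hcount := key_count A M hApos hMpos S hSsub Ms hMsub X hSX B hMsB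
  rw [hMscard] at hcount
  set N := s * (B * X) with hNdef
  have hsum : ∑ n ∈ Finset.Icc s N, pAM A M n ≤ (N + 1) ^ (k + 1) := by
    calc ∑ n ∈ Finset.Icc s N, pAM A M n ≤ ∑ _n ∈ Finset.Icc s N, (N + 1) ^ k := by
          apply Finset.sum_le_sum
          intro n hn
          obtain ⟨h1, h2⟩ := Finset.mem_Icc.mp hn
          exact (hpoly n (hsN₀.trans h1)).trans (Nat.pow_le_pow_left (by omega) k)
      _ = (Finset.Icc s N).card * (N + 1) ^ k := by rw [Finset.sum_const, smul_eq_mul]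
      _ ≤ (N + 1) * (N + 1) ^ k := by
          apply Nat.mul_le_mul_right
          rw [Nat.card_Icc]; omega
      _ = (N + 1) ^ (k + 1) := by ring
  have hnat : q ^ s ≤ (N + 1) ^ (k + 1) := hcount.trans hsum
  have hcast : (q : ℝ) ^ s ≤ ((N : ℝ) + 1) ^ (k + 1) := by exact_mod_cast hnat
  -- real estimates
  have hXx : (X : ℝ) ≤ x := Nat.floor_le hx0.le
  have hxexp : x ≤ Real.exp ((s : ℝ) / c) := by
    rw [← Real.log_le_iff_le_exp hx0]
    rw [le_div_iff₀ hc]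
    linarith [hsR]
  have hexps1 : (1 : ℝ) ≤ Real.exp ((s : ℝ) / c) := Real.one_le_exp (by positivity)
  have hX2 : (X : ℝ) + 1 ≤ 2 * Real.exp ((s : ℝ) / c) := by linarith
  have hN1 : ((N : ℝ) + 1) ≤ ((s : ℝ) + 1) * (((B : ℝ) + 1) * ((X : ℝ) + 1)) := by
    have hNr : (N : ℝ) = (s : ℝ) * ((B : ℝ) * (X : ℝ)) := by rw [hNdef]; push_cast; ring
    rw [hNr]
    have h1 : (0:ℝ) ≤ s := Nat.cast_nonneg _
    have h2 : (0:ℝ) ≤ B := Nat.cast_nonneg _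
    have h3 : (0:ℝ) ≤ X := Nat.cast_nonneg _
    nlinarith
  have hN2 : ((N : ℝ) + 1) ≤ ((s : ℝ) + 1) * (((B : ℝ) + 1) * (2 * Real.exp ((s : ℝ) / c))) := by
    refine hN1.trans ?_
    apply mul_le_mul_of_nonneg_left _ (by positivity)
    apply mul_le_mul_of_nonneg_left hX2 (by positivity)
  have hexp_eq : (Real.exp ((s : ℝ) / c)) ^ (k + 1) = (Real.exp (((k : ℝ) + 1) / c)) ^ s := by
    rw [← Real.exp_nat_mul, ← Real.exp_nat_mul]
    congr 1
    push_cast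
    ring
  have main : (q : ℝ) ^ s ≤ K * (((s : ℝ) + 1) ^ (k + 1) * (Real.exp (((k : ℝ) + 1) / c)) ^ s) := by
    calc (q : ℝ) ^ s ≤ ((N : ℝ) + 1) ^ (k + 1) := hcast
      _ ≤ (((s : ℝ) + 1) * (((B : ℝ) + 1) * (2 * Real.exp ((s : ℝ) / c)))) ^ (k + 1) := by
          apply pow_le_pow_left₀ (by positivity) hN2
      _ = K * (((s : ℝ) + 1) ^ (k + 1) * (Real.exp ((s : ℝ) / c)) ^ (k + 1)) := by
          rw [hKdef, ← mul_pow, ← mul_pow]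
          congr 1
          ring
      _ = K * (((s : ℝ) + 1) ^ (k + 1) * (Real.exp (((k : ℝ) + 1) / c)) ^ s) := by
          rw [hexp_eq]
  -- divide by the exponential factor
  have hEs : (0 : ℝ) < (Real.exp (((k : ℝ) + 1) / c)) ^ s := by positivity
  have hrs : r ^ s ≤ K * ((s : ℝ) + 1) ^ (k + 1) := by
    have hq_eq : (q : ℝ) ^ s = r ^ s * (Real.exp (((k : ℝ) + 1) / c)) ^ s := by
      rw [hrdef, div_pow]
      field_simp
    rw [hq_eq] at main
    have := (mul_le_mul_iff_of_pos_right hEs).mp (by linarith [main] : r ^ s * (Real.exp (((k : ℝ) + 1) / c)) ^ s ≤ (K * ((s : ℝ) + 1) ^ (k + 1)) * (Real.exp (((k : ℝ) + 1) / c)) ^ s)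
    exact this
  -- contradiction with the choice of n₁
  have hsn := hn₁ (s + 1) (by omega)
  have hrpow : (0 : ℝ) < r ^ (s + 1) := by positivity
  rw [div_lt_div_iff₀ hrpow (by positivity : (0:ℝ) < K * r)] at hsn
  have hfin : K * ((s : ℝ) + 1) ^ (k + 1) < r ^ s := by
    have h1 : (((s + 1 : ℕ) : ℝ)) ^ (k + 1) * (K * r) < r ^ (s + 1) := by linarith [hsn]
    have h2 : (((s + 1 : ℕ) : ℝ)) = (s : ℝ) + 1 := by push_cast; ring
    rw [h2] at h1
    have h6 : (((s : ℝ) + 1) ^ (k + 1) * K) * r < r ^ s * r := by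
      rw [mul_assoc, ← pow_succ]
      exact h1
    have h4 := lt_of_mul_lt_mul_right h6 hr0.le
    rw [mul_comm]
    exact h4
  linarith
end
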